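/- Let k be an algebraically closed field and let m ≥ 2, n ≥ 4, and 1 ≤ h ≤ n − 3 be integers. Let I_{m,n,h} be the ideal of the polynomial ring k[z_{i,j} : 1 ≤ i ≤ m, 1 ≤ j ≤ n] generated by the (m−1)(n−h−1) polynomials e_n^j(z_{1,1}, …, z_{1,n}) − e_n^j(z_{i,1}, …, z_{i,n}) for 2 ≤ i ≤ m and 1 ≤ j ≤ n − h − 1. Then the Krull dimension of the quotient ring k[z_{i,j}] / I_{m,n,h} equals n + (m−1)(h+1). -/

import Mathlib

open MvPolynomial


section S1
variable {K : Type*} [Field K]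

/-- Any `N+1` elements of a polynomial ring in `N` variables over a field are
algebraically dependent. -/
theorem not_algebraicIndependent_succ (N : ℕ) (y : Fin (N + 1) → MvPolynomial (Fin N) K) :
    ¬ AlgebraicIndependent K y := by
  classical
  intro hind
  set D := Finset.univ.sup (fun i => (y i).totalDegree) with hD
  set M := ((N + 1) * (D + 1)) ^ N with hM
  set t := (N + 1) * M * D with ht
  set A : Finset (Fin (N + 1) →₀ ℕ) :=
    (Fintype.piFinset fun _ : Fin (N + 1) => Finset.range (M + 1)).image
      (Finsupp.equivFunOnFinite.symm) with hA
  set B : Finset (Fin N →₀ ℕ) :=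
    (Fintype.piFinset fun _ : Fin N => Finset.range (t + 1)).image
      (Finsupp.equivFunOnFinite.symm) with hB
  have hAcard : A.card = (M + 1) ^ (N + 1) := by
    rw [hA, Finset.card_image_of_injective _ (Equiv.injective _), Fintype.card_piFinset]
    simp
  have hBcard : B.card ≤ (t + 1) ^ N := by
    calc B.card ≤ (Fintype.piFinset fun _ : Fin N => Finset.range (t + 1)).card :=
          Finset.card_image_le
      _ = (t + 1) ^ N := by rw [Fintype.card_piFinset]; simp
  set v : A → MvPolynomial (Fin N) K :=
    fun α => ∏ i, y i ^ ((α : Fin (N + 1) →₀ ℕ) i) with hv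
  have hli : LinearIndependent K v := by
    rw [Fintype.linearIndependent_iff]
    intro g hg
    set F : MvPolynomial (Fin (N + 1)) K :=
      ∑ α : A, MvPolynomial.monomial (α : Fin (N + 1) →₀ ℕ) (g α) with hF
    have haev : MvPolynomial.aeval y F = 0 := by
      rw [hF, map_sum, ← hg]
      refine Finset.sum_congr rfl fun α _ => ?_
      rw [aeval_monomial]
      simp [hv, Algebra.smul_def]
    have hF0 : F = 0 := (algebraicIndependent_iff.mp hind) F haev
    intro α
    have hco := congrArg (MvPolynomial.coeff (α : Fin (N + 1) →₀ ℕ)) hF0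
    rw [hF, MvPolynomial.coeff_zero, MvPolynomial.coeff_sum,
      Finset.sum_eq_single α] at hco
    · simpa [MvPolynomial.coeff_monomial] using hco
    · intro β _ hβα
      rw [MvPolynomial.coeff_monomial, if_neg]
      intro hc
      exact hβα (Subtype.ext (by exact_mod_cast hc))
    · simp
  have hspan : Set.range v ≤ Submodule.span K
      ((B.image fun β => (MvPolynomial.monomial β (1 : K))) : Set (MvPolynomial (Fin N) K)) := by
    rintro _ ⟨α, rfl⟩
    have hdeg : (v α).totalDegree ≤ t := by
      have h1 : (v α).totalDegree ≤ ∑ i, ((α : Fin (N + 1) →₀ ℕ) i) * D := by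
        refine le_trans (MvPolynomial.totalDegree_finset_prod _ _) ?_
        refine Finset.sum_le_sum fun i _ => ?_
        refine le_trans (MvPolynomial.totalDegree_pow _ _) ?_
        exact Nat.mul_le_mul_left _
          (Finset.le_sup (f := fun i => (y i).totalDegree) (Finset.mem_univ i))
      refine le_trans h1 ?_
      have h2 : ∀ i : Fin (N + 1), (α : Fin (N + 1) →₀ ℕ) i ≤ M := by
        intro i
        obtain ⟨α, hαmem⟩ := α
        rw [hA] at hαmem
        simp only [Finset.mem_image] at hαmem
        obtain ⟨f, hf, rfl⟩ := hαmem
        rw [Fintype.mem_piFinset] at hf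
        have := hf i
        rw [Finset.mem_range] at this
        simpa using Nat.lt_succ_iff.mp this
      calc ∑ i, ((α : Fin (N + 1) →₀ ℕ) i) * D ≤ ∑ _i : Fin (N + 1), M * D :=
            Finset.sum_le_sum fun i _ => Nat.mul_le_mul_right _ (h2 i)
        _ = (N + 1) * M * D := by
            rw [Finset.sum_const, Finset.card_univ]
            simp [smul_eq_mul, mul_assoc]
    rw [(v α).as_sum]
    refine Submodule.sum_mem _ fun β hβ => ?_
    have hβB : β ∈ B := by
      rw [hB]
      simp only [Finset.mem_image]
      refine ⟨Finsupp.equivFunOnFinite β, ?_, by simp⟩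
      rw [Fintype.mem_piFinset]
      intro i
      rw [Finset.mem_range, Nat.lt_succ_iff]
      have hle : β i ≤ β.sum fun _ e => e := by
        by_cases hz : β i = 0
        · simp [hz]
        · exact Finset.single_le_sum (f := fun j => β j) (fun _ _ => Nat.zero_le _)
            (Finsupp.mem_support_iff.mpr hz)
      calc (Finsupp.equivFunOnFinite β) i = β i := rfl
        _ ≤ β.sum fun _ e => e := hle
        _ ≤ (v α).totalDegree := MvPolynomial.le_totalDegree hβ
        _ ≤ t := hdeg
    have hmono : MvPolynomial.monomial β (MvPolynomial.coeff β (v α))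
        = (MvPolynomial.coeff β (v α)) • MvPolynomial.monomial β (1 : K) := by
      rw [MvPolynomial.smul_monomial]; simp
    rw [hmono]
    exact Submodule.smul_mem _ _ (Submodule.subset_span
      (Finset.mem_coe.mpr (Finset.mem_image_of_mem _ hβB)))
  have hcard : A.card ≤ (B.image fun β => (MvPolynomial.monomial β (1 : K))).card := by
    have h1 := linearIndependent_le_span' v hli
      ((B.image fun β => (MvPolynomial.monomial β (1 : K))) : Set (MvPolynomial (Fin N) K)) hspan
    rw [Cardinal.mk_fintype] at h1
    have h2 := Nat.cast_le.mp h1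
    simpa only [Finset.coe_sort_coe, Fintype.card_coe] using h2
  -- numerics
  have hM1 : 1 ≤ M := Nat.one_le_pow _ _ (by positivity)
  have hfinal : (t + 1) ^ N < (M + 1) ^ (N + 1) := by
    have ht1 : t + 1 ≤ (N + 1) * (D + 1) * M := by
      have h3 : (N + 1) * M * D + (N + 1) * M = (N + 1) * (D + 1) * M := by ring
      have hg : 1 ≤ (N + 1) * M := Nat.mul_pos (Nat.succ_pos N) hM1
      omega
    calc (t + 1) ^ N ≤ ((N + 1) * (D + 1) * M) ^ N := Nat.pow_le_pow_left ht1 N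
      _ = ((N + 1) * (D + 1)) ^ N * M ^ N := by rw [mul_pow]
      _ = M ^ (N + 1) := by rw [← hM, pow_succ, mul_comm]
      _ < (M + 1) ^ (N + 1) := Nat.pow_lt_pow_left (Nat.lt_succ_self M) (Nat.succ_ne_zero N)
  have : (M + 1) ^ (N + 1) ≤ (t + 1) ^ N := by
    calc (M + 1) ^ (N + 1) = A.card := hAcard.symm
      _ ≤ (B.image fun β => (MvPolynomial.monomial β (1 : K))).card := hcard
      _ ≤ B.card := Finset.card_image_le
      _ ≤ (t + 1) ^ N := hBcard
  omega

end S1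


section S2
variable {K : Type*} [Field K]

lemma exists_X_pow_mul_coeff_zero_ne {A : Type*} [CommRing A] [IsDomain A]
    (P : Polynomial A) (hP : P ≠ 0) :
    ∃ (j : ℕ) (Q : Polynomial A), P = Polynomial.X ^ j * Q ∧ Q.coeff 0 ≠ 0 := by
  have H : ∀ (n : ℕ) (P : Polynomial A), P ≠ 0 → P.natDegree = n →
      ∃ (j : ℕ) (Q : Polynomial A), P = Polynomial.X ^ j * Q ∧ Q.coeff 0 ≠ 0 := by
    intro n
    induction n using Nat.strong_induction_on with
    | _ n ih =>
      intro P hP hn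
      by_cases h0 : P.coeff 0 ≠ 0
      · exact ⟨0, P, by simp, h0⟩
      · push_neg at h0
        obtain ⟨Q, hQ⟩ := (Polynomial.X_dvd_iff).mpr h0
        have hQ0 : Q ≠ 0 := by rintro rfl; simp at hQ; exact hP hQ
        have hdeg : Q.natDegree < n := by
          subst hn
          rw [hQ, Polynomial.natDegree_mul Polynomial.X_ne_zero hQ0,
            Polynomial.natDegree_X]
          omega
        obtain ⟨j, Q', hQ', hQ'0⟩ := ih Q.natDegree hdeg Q hQ0 rfl
        exact ⟨j + 1, Q', by rw [hQ, hQ', pow_succ]; ring, hQ'0⟩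
  exact H P.natDegree P hP rfl

lemma aeval_fin_cons {A : Type*} [CommRing A] [Algebra K A] {d : ℕ}
    (t : A) (f : Fin d → A) (F : MvPolynomial (Fin (d + 1)) K) :
    MvPolynomial.aeval (Fin.cons t f) F =
      Polynomial.eval₂ ((MvPolynomial.aeval f : MvPolynomial (Fin d) K →ₐ[K] A) :
        MvPolynomial (Fin d) K →+* A) t (MvPolynomial.finSuccEquiv K d F) := by
  have h : ((MvPolynomial.aeval (Fin.cons t f) :
      MvPolynomial (Fin (d + 1)) K →ₐ[K] A) : MvPolynomial (Fin (d + 1)) K →+* A) =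
      (Polynomial.eval₂RingHom ((MvPolynomial.aeval f :
        MvPolynomial (Fin d) K →ₐ[K] A) : MvPolynomial (Fin d) K →+* A) t).comp
        ((MvPolynomial.finSuccEquiv K d) : MvPolynomial (Fin (d + 1)) K →+* _) := by
    apply MvPolynomial.ringHom_ext
    · intro a
      simp [MvPolynomial.finSuccEquiv_apply]
    · intro i
      refine Fin.cases ?_ ?_ i
      · simp [MvPolynomial.finSuccEquiv_X_zero]
      · intro j
        simp [MvPolynomial.finSuccEquiv_X_succ]
  exact RingHom.congr_fun h F

lemma algebraicIndependent_cons_of_ker {A B : Type*} [CommRing A] [IsDomain A] [CommRing B]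
    [Algebra K A] [Algebra K B] (π : A →ₐ[K] B) {d : ℕ} {f : Fin d → A}
    (hf : AlgebraicIndependent K (⇑π ∘ f)) {t : A} (ht : t ≠ 0) (ht0 : π t = 0) :
    AlgebraicIndependent K (Fin.cons t f : Fin (d + 1) → A) := by
  rw [algebraicIndependent_iff]
  intro F hF
  by_contra hF0
  set P := MvPolynomial.finSuccEquiv K d F with hP
  have hPne : P ≠ 0 := by
    intro h
    apply hF0
    have := congrArg (MvPolynomial.finSuccEquiv K d).symm h
    simpa [hP] using this
  obtain ⟨j, Q, hPQ, hQ0⟩ := exists_X_pow_mul_coeff_zero_ne P hPne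
  have heval : Polynomial.eval₂ ((MvPolynomial.aeval f : MvPolynomial (Fin d) K →ₐ[K] A) :
      MvPolynomial (Fin d) K →+* A) t P = 0 := by
    rw [← aeval_fin_cons, hF]
  rw [hPQ, Polynomial.eval₂_mul, Polynomial.eval₂_X_pow] at heval
  have ht2 : Polynomial.eval₂ ((MvPolynomial.aeval f : MvPolynomial (Fin d) K →ₐ[K] A) :
      MvPolynomial (Fin d) K →+* A) t Q = 0 := by
    rcases mul_eq_zero.mp heval with h | h
    · exact absurd ((pow_eq_zero_iff'.mp h).1) ht
    · exact h
  have happ : (π : A →+* B) (Polynomial.eval₂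
      ((MvPolynomial.aeval f : MvPolynomial (Fin d) K →ₐ[K] A) :
        MvPolynomial (Fin d) K →+* A) t Q) = 0 := by
    rw [ht2, map_zero]
  rw [Polynomial.hom_eval₂] at happ
  have hπt : (π : A →+* B) t = 0 := ht0
  rw [hπt, Polynomial.eval₂_at_zero, RingHom.comp_apply] at happ
  have h4 : (MvPolynomial.aeval (⇑π ∘ f)) (Q.coeff 0) = 0 := by
    have := MvPolynomial.comp_aeval_apply (f := f) π (Q.coeff 0)
    simp only [AlgHom.coe_toRingHom] at happ
    rw [Function.comp_def]
    rw [← this]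
    exact happ
  exact hQ0 ((algebraicIndependent_iff.mp hf) _ h4)

lemma exists_algIndep_of_ltSeries {R : Type*} [CommRing R] [Algebra K R] :
    ∀ (n : ℕ) (p : LTSeries (PrimeSpectrum R)) (_ : p.length = n)
    (I : PrimeSpectrum R) (_ : I = p.head),
    ∃ f : Fin n → (R ⧸ I.asIdeal), AlgebraicIndependent K f := by
  intro n
  induction n with
  | zero =>
    intro p _ I _
    refine ⟨Fin.elim0, ?_⟩
    have : Nontrivial (R ⧸ I.asIdeal) := Ideal.Quotient.nontrivial_iff.mpr I.isPrime.ne_top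
    exact algebraicIndependent_empty_type
  | succ d ih =>
    intro p hlen I hI
    have hpos : p.length ≠ 0 := by omega
    obtain ⟨f, hf⟩ := ih (p.tail hpos) (by simp [hlen]) (p 1) (RelSeries.head_tail p hpos).symm
    have hlt : I < p 1 := by
      rw [hI]
      have h01 : (0 : Fin (p.length + 1)) < 1 := by
        rw [Fin.lt_iff_val_lt_val, Fin.val_one', Nat.mod_eq_of_lt (by omega)]
        simp
      exact p.strictMono h01
    have hle : I.asIdeal ≤ (p 1).asIdeal := le_of_lt hlt
    set π : (R ⧸ I.asIdeal) →ₐ[K] (R ⧸ (p 1).asIdeal) :=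
      Ideal.quotientMapₐ _ (AlgHom.id K R) (by simpa using hle) with hπ
    have hπsurj : Function.Surjective π := by
      intro y
      obtain ⟨x, rfl⟩ := Ideal.Quotient.mk_surjective y
      exact ⟨Ideal.Quotient.mk _ x, by simp [hπ]⟩
    choose g hg using fun i => hπsurj (f i)
    obtain ⟨x, hx1, hx0⟩ := SetLike.exists_of_lt
      (show I.asIdeal < (p 1).asIdeal from hlt)
    refine ⟨Fin.cons (Ideal.Quotient.mk _ x) g, ?_⟩
    apply algebraicIndependent_cons_of_ker π
    · have : ⇑π ∘ g = f := funext hg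
      rw [this]; exact hf
    · rw [Ne, Ideal.Quotient.eq_zero_iff_mem]; exact hx0
    · rw [hπ, Ideal.quotient_map_mkₐ]
      rw [Ideal.Quotient.mkₐ_eq_mk]
      rw [Ideal.Quotient.eq_zero_iff_mem]
      simpa using hx1

/-- Every chain of primes in `MvPolynomial (Fin N) K` has length at most `N`. -/
lemma ltSeries_length_le (N : ℕ) (p : LTSeries (PrimeSpectrum (MvPolynomial (Fin N) K))) :
    p.length ≤ N := by
  by_contra hcon
  push_neg at hcon
  obtain ⟨f, hf⟩ := exists_algIndep_of_ltSeries (K := K) p.length p rfl p.head rfl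
  choose g hg using fun i => Ideal.Quotient.mk_surjective (f i)
  have hg' : AlgebraicIndependent K g := by
    apply AlgebraicIndependent.of_comp (Ideal.Quotient.mkₐ K p.head.asIdeal)
    have : ⇑(Ideal.Quotient.mkₐ K p.head.asIdeal) ∘ g = f := by
      funext i; simpa using hg i
    rw [this]; exact hf
  have := hg'.comp (fun i : Fin (N + 1) => Fin.castLE hcon i)
    (fun a b hab => by simpa [Fin.ext_iff] using hab)
  exact not_algebraicIndependent_succ (K := K) N _ this

end S2


section S3
variable {K : Type*} [Field K]

/-- The variable-killing endomorphism. -/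
noncomputable def killVars (N : ℕ) (i : ℕ) :
    MvPolynomial (Fin N) K →ₐ[K] MvPolynomial (Fin N) K :=
  MvPolynomial.aeval (fun j : Fin N => if (j : ℕ) < i then 0 else MvPolynomial.X j)

lemma killVars_comp {N : ℕ} {i i' : ℕ} (h : i ≤ i') (p : MvPolynomial (Fin N) K) :
    killVars N i' (killVars N i p) = killVars N i' p := by
  have : (killVars (K := K) N i').comp (killVars N i) = killVars N i' := by
    apply MvPolynomial.algHom_ext
    intro j
    simp only [AlgHom.comp_apply, killVars, MvPolynomial.aeval_X]
    by_cases hj : (j : ℕ) < i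
    · rw [if_pos hj, map_zero, if_pos (lt_of_lt_of_le hj h)]
    · rw [if_neg hj, MvPolynomial.aeval_X]
  exact AlgHom.congr_fun this p

/-- `ringKrullDim (MvPolynomial (Fin N) K) = N`. -/
theorem ringKrullDim_mvPolynomial_fin (N : ℕ) :
    ringKrullDim (MvPolynomial (Fin N) K) = (N : ℕ) := by
  apply le_antisymm
  · refine iSup_le fun p => ?_
    exact_mod_cast Nat.cast_le.mpr (ltSeries_length_le N p)
  · -- build a chain of length N
    set q : LTSeries (PrimeSpectrum (MvPolynomial (Fin N) K)) :=
      { length := N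
        toFun := fun l => ⟨RingHom.ker (killVars (K := K) N l),
          RingHom.ker_isPrime _⟩
        step := by
          intro l
          constructor
          · intro x hx
            have hx' : killVars (K := K) N l.castSucc x = 0 := hx
            show killVars (K := K) N l.succ x = 0
            rw [← killVars_comp (show (l.castSucc : ℕ) ≤ (l.succ : ℕ) by simp) x, hx', map_zero]
          · intro hcon
            have hmem : MvPolynomial.X (Fin.mk (l : ℕ) (by omega) : Fin N) ∈
                RingHom.ker (killVars (K := K) N l.succ) := by
              show killVars (K := K) N l.succ _ = 0
              simp only [killVars, MvPolynomial.aeval_X]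
              rw [if_pos (by simp)]
            have := hcon hmem
            have h2 : killVars (K := K) N l.castSucc
                (MvPolynomial.X (Fin.mk (l : ℕ) (by omega))) = 0 := this
            simp only [killVars, MvPolynomial.aeval_X] at h2
            rw [if_neg (by simp)] at h2
            exact MvPolynomial.X_ne_zero _ h2 } with hq
    have := Order.LTSeries.length_le_krullDim q
    simpa [hq] using this

end S3

section S4
variable {R S : Type*} [CommRing R] [CommRing S] [Algebra R S]

lemma ringKrullDim_le_of_isIntegral [Algebra.IsIntegral R S] :
    ringKrullDim S ≤ ringKrullDim R := by
  apply Order.krullDim_le_of_strictMono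
    (fun q : PrimeSpectrum S => (⟨q.asIdeal.comap (algebraMap R S), inferInstance⟩ :
      PrimeSpectrum R))
  intro q1 q2 hq
  obtain ⟨x, hx2, hx1⟩ := SetLike.exists_of_lt (show q1.asIdeal < q2.asIdeal from hq)
  exact Ideal.comap_lt_comap_of_integral_mem_sdiff (le_of_lt hq) ⟨hx2, hx1⟩
    (Algebra.IsIntegral.isIntegral x)

lemma ringKrullDim_le_of_isIntegral_of_injective [Algebra.IsIntegral R S]
    (hinj : Function.Injective (algebraMap R S)) :
    ringKrullDim R ≤ ringKrullDim S := by
  have key : ∀ (n : ℕ) (p : LTSeries (PrimeSpectrum R)), p.length = n →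
      ∃ q : LTSeries (PrimeSpectrum S), q.length = n ∧
        q.last.asIdeal.comap (algebraMap R S) = p.last.asIdeal := by
    intro n
    induction n with
    | zero =>
      intro p hlen
      obtain ⟨Q, _, hQprime, hQcomap⟩ :=
        Ideal.exists_ideal_over_prime_of_isIntegral p.last.asIdeal (⊥ : Ideal S)
          (by
            rw [← RingHom.ker_eq_comap_bot, (RingHom.injective_iff_ker_eq_bot _).mp hinj]
            exact bot_le)
      exact ⟨RelSeries.singleton _ ⟨Q, hQprime⟩, rfl, hQcomap⟩
    | succ d ih =>
      intro p hlen
      have hpos : p.length ≠ 0 := by omega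
      obtain ⟨q, hqlen, hqcomap⟩ := ih p.eraseLast (by simp [hlen])
      have hlast_le : p.eraseLast.last ≤ p.last := by
        apply p.monotone
        simp [Fin.le_iff_val_le_val]
      obtain ⟨Q, hQge, hQprime, hQcomap⟩ :=
        Ideal.exists_ideal_over_prime_of_isIntegral p.last.asIdeal q.last.asIdeal
          (by rw [hqcomap]; exact hlast_le)
      have hlast_lt : p.eraseLast.last < p.last := by
        have hstep := p.step ⟨d, by omega⟩
        have e1 : p.eraseLast.last = p (⟨d, by omega⟩ : Fin p.length).castSucc := by
          rw [RelSeries.last_eraseLast]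
          congr 1
          ext
          simp [hlen]
        have e2 : p.last = p (⟨d, by omega⟩ : Fin p.length).succ := by
          show p (Fin.last _) = _
          congr 1
          ext
          simp [hlen]
        rw [e1, e2]
        exact hstep
      have hQlt : q.last < (⟨Q, hQprime⟩ : PrimeSpectrum S) := by
        rcases lt_or_eq_of_le (show q.last.asIdeal ≤ Q from hQge) with h | h
        · exact h
        · exfalso
          have : q.last.asIdeal.comap (algebraMap R S) = p.last.asIdeal := by
            rw [h, hQcomap]
          rw [hqcomap] at this
          exact (ne_of_lt hlast_lt) (PrimeSpectrum.ext this)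
      refine ⟨q.snoc ⟨Q, hQprime⟩ hQlt, by simp [hqlen], by simpa using hQcomap⟩
  refine iSup_le fun p => ?_
  obtain ⟨q, hqlen, -⟩ := key p.length p rfl
  have := Order.LTSeries.length_le_krullDim q
  rw [hqlen] at this
  exact this

lemma ringKrullDim_eq_of_isIntegral_of_injective [Algebra.IsIntegral R S]
    (hinj : Function.Injective (algebraMap R S)) :
    ringKrullDim S = ringKrullDim R :=
  le_antisymm ringKrullDim_le_of_isIntegral (ringKrullDim_le_of_isIntegral_of_injective hinj)

end S4


noncomputable section Main

variable (k : Type*) [Field k]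

/-- Sign helper. -/
lemma neg_one_pow_helper {A : Type*} [CommRing A] {n j : ℕ} (hj : j ≤ n) :
    ((-1 : A) ^ n) * (-1 : A) ^ (n - j) = (-1 : A) ^ j := by
  rw [← pow_add]
  have he : n + (n - j) = 2 * (n - j) + j := by omega
  rw [he, pow_add, pow_mul]
  simp

/-- The fundamental Vieta identity: each variable is a root of the generic monic polynomial
with elementary symmetric coefficients. -/
lemma esymm_vieta (n : ℕ) (l : Fin n) :
    (MvPolynomial.X l : MvPolynomial (Fin n) k) ^ n +
      ∑ j ∈ Finset.Icc 1 n, ((-1 : MvPolynomial (Fin n) k) ^ j *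
        MvPolynomial.esymm (Fin n) k j * (MvPolynomial.X l) ^ (n - j)) = 0 := by
  have hV := MvPolynomial.prod_C_add_X_eq_sum_esymm k (Fin n)
  rw [Fintype.card_fin] at hV
  have h0 := congrArg (Polynomial.eval (-(MvPolynomial.X l) : MvPolynomial (Fin n) k)) hV
  rw [Polynomial.eval_prod] at h0
  rw [Finset.prod_eq_zero (Finset.mem_univ l) (by simp)] at h0
  rw [Polynomial.eval_finset_sum] at h0
  simp only [Polynomial.eval_mul, Polynomial.eval_C, Polynomial.eval_pow,
    Polynomial.eval_neg, Polynomial.eval_X] at h0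
  -- h0 : 0 = ∑ j in range (n+1), esymm j * (-X l) ^ (n - j)
  have h1 : (0 : MvPolynomial (Fin n) k) =
      ∑ j ∈ Finset.range (n + 1), ((-1 : MvPolynomial (Fin n) k) ^ j *
        MvPolynomial.esymm (Fin n) k j * (MvPolynomial.X l) ^ (n - j)) := by
    have h2 := congrArg (fun z => ((-1 : MvPolynomial (Fin n) k) ^ n) * z) h0
    simp only [mul_zero] at h2
    rw [Finset.mul_sum] at h2
    rw [h2]
    refine Finset.sum_congr rfl fun j hj => ?_
    rw [Finset.mem_range] at hj
    have hjn : j ≤ n := by omega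
    rw [neg_pow (MvPolynomial.X l : MvPolynomial (Fin n) k) (n - j)]
    calc (-1 : MvPolynomial (Fin n) k) ^ n *
          (MvPolynomial.esymm (Fin n) k j * ((-1) ^ (n - j) * (MvPolynomial.X l) ^ (n - j)))
        = ((-1 : MvPolynomial (Fin n) k) ^ n * (-1) ^ (n - j)) *
          (MvPolynomial.esymm (Fin n) k j * (MvPolynomial.X l) ^ (n - j)) := by ring
      _ = (-1 : MvPolynomial (Fin n) k) ^ j *
          MvPolynomial.esymm (Fin n) k j * (MvPolynomial.X l) ^ (n - j) := by
          rw [neg_one_pow_helper hjn]; ring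
  have hsplit : Finset.range (n + 1) = insert 0 (Finset.Icc 1 n) := by
    ext j; simp; omega
  rw [hsplit, Finset.sum_insert (by simp)] at h1
  simp only [pow_zero, one_mul, MvPolynomial.esymm_zero, Nat.sub_zero] at h1
  exact h1.symm

/-- The index type of the small polynomial ring. -/
abbrev NIdx (m n h : ℕ) := (Fin (n - h - 1)) ⊕ (Fin m × Fin (h + 1))

/-- The small polynomial ring. -/
abbrev Pring (m n h : ℕ) := MvPolynomial (NIdx m n h) k

/-- The big polynomial ring. -/
abbrev R0ring (m n : ℕ) := MvPolynomial (Fin m × Fin n) k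

/-- The generating set of the ideal. -/
def genSet (m n h : ℕ) (hm : 0 < m) : Set (R0ring k m n) :=
  {p : MvPolynomial (Fin m × Fin n) k | ∃ (i : Fin m) (j : ℕ),
    i ≠ ⟨0, hm⟩ ∧ 1 ≤ j ∧ j ≤ n - h - 1 ∧
    p = MvPolynomial.rename (Prod.mk (⟨0, hm⟩ : Fin m)) (MvPolynomial.esymm (Fin n) k j) -
        MvPolynomial.rename (Prod.mk i) (MvPolynomial.esymm (Fin n) k j)}

/-- Coefficient selector. -/
def cvar {m n h : ℕ} (hn : 3 ≤ n) (hh : h ≤ n - 3) (i : Fin m) (j : ℕ) : Pring k m n h :=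
  if hj : 1 ≤ j ∧ j ≤ n - h - 1 then
    MvPolynomial.X (Sum.inl ⟨j - 1, by omega⟩)
  else if hj' : n - h ≤ j ∧ j ≤ n then
    MvPolynomial.X (Sum.inr (i, ⟨j - (n - h), by omega⟩))
  else 0

/-- The elements of the big ring to which the small variables are sent. -/
def Evar (m n h : ℕ) (hm : 0 < m) : NIdx m n h → R0ring k m n :=
  Sum.elim
    (fun j => MvPolynomial.rename (Prod.mk (⟨0, hm⟩ : Fin m))
      (MvPolynomial.esymm (Fin n) k ((j : ℕ) + 1)))
    (fun il => MvPolynomial.rename (Prod.mk il.1)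
      (MvPolynomial.esymm (Fin n) k (n - h + (il.2 : ℕ))))

/-- The ideal. -/
def theIdeal (m n h : ℕ) (hm : 0 < m) : Ideal (R0ring k m n) := Ideal.span (genSet k m n h hm)

/-- The quotient ring. -/
abbrev Qring (m n h : ℕ) (hm : 0 < m) := R0ring k m n ⧸ theIdeal k m n h hm

/-- The structure map. -/
def ψmap (m n h : ℕ) (hm : 0 < m) : Pring k m n h →ₐ[k] Qring k m n h hm :=
  MvPolynomial.aeval (fun x => Ideal.Quotient.mk (theIdeal k m n h hm) (Evar k m n h hm x))

variable {m n h : ℕ} (hm : 0 < m) (hn : 3 ≤ n) (hh : h ≤ n - 3)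

/-- In the quotient, the low elementary symmetric functions of every row agree with row 0. -/
lemma mk_rename_esymm_eq (i : Fin m) (j : ℕ) (h1 : 1 ≤ j) (h2 : j ≤ n - h - 1) :
    Ideal.Quotient.mk (theIdeal k m n h hm)
        (MvPolynomial.rename (Prod.mk i) (MvPolynomial.esymm (Fin n) k j)) =
      Ideal.Quotient.mk (theIdeal k m n h hm)
        (MvPolynomial.rename (Prod.mk (⟨0, hm⟩ : Fin m)) (MvPolynomial.esymm (Fin n) k j)) := by
  by_cases hi : i = ⟨0, hm⟩
  · rw [hi]
  · rw [Ideal.Quotient.mk_eq_mk_iff_sub_mem]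
    have hmem : MvPolynomial.rename (Prod.mk (⟨0, hm⟩ : Fin m)) (MvPolynomial.esymm (Fin n) k j) -
        MvPolynomial.rename (Prod.mk i) (MvPolynomial.esymm (Fin n) k j) ∈
        theIdeal k m n h hm :=
      Ideal.subset_span ⟨i, j, hi, h1, h2, rfl⟩
    have := (theIdeal k m n h hm).neg_mem hmem
    simpa using this

/-- `ψmap` sends `cvar i j` to the class of the `j`-th symmetric function of row `i`. -/
lemma ψmap_cvar (i : Fin m) (j : ℕ) (h1 : 1 ≤ j) (h2 : j ≤ n) :
    ψmap k m n h hm (cvar k hn hh i j) =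
      Ideal.Quotient.mk (theIdeal k m n h hm)
        (MvPolynomial.rename (Prod.mk i) (MvPolynomial.esymm (Fin n) k j)) := by
  rw [cvar]
  by_cases hj : 1 ≤ j ∧ j ≤ n - h - 1
  · rw [dif_pos hj, ψmap, MvPolynomial.aeval_X]
    rw [Evar]
    simp only [Sum.elim_inl]
    have hj1 : (j - 1) + 1 = j := by omega
    rw [hj1]
    exact (mk_rename_esymm_eq k hm i j hj.1 hj.2).symm
  · have hj' : n - h ≤ j ∧ j ≤ n := by omega
    rw [dif_neg hj, dif_pos hj', ψmap, MvPolynomial.aeval_X]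
    rw [Evar]
    simp only [Sum.elim_inr]
    have hj1 : n - h + (j - (n - h)) = j := by omega
    rw [hj1]

/-- The characteristic polynomial of a row. -/
def Gpoly (i : Fin m) : Polynomial (Pring k m n h) :=
  Polynomial.X ^ n + ∑ j ∈ Finset.Icc 1 n,
    Polynomial.C ((-1 : Pring k m n h) ^ j * cvar k hn hh i j) * Polynomial.X ^ (n - j)

lemma Gpoly_degree_sum_lt :
    ∀ i : Fin m, (∑ j ∈ Finset.Icc 1 n,
      Polynomial.C ((-1 : Pring k m n h) ^ j * cvar k hn hh i j) *
        Polynomial.X ^ (n - j)).degree < (Polynomial.X ^ n :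
          Polynomial (Pring k m n h)).degree := by
  intro i
  rw [Polynomial.degree_X_pow]
  refine lt_of_le_of_lt (Polynomial.degree_sum_le _ _) ?_
  rw [Finset.sup_lt_iff (by exact_mod_cast WithBot.bot_lt_coe n)]
  intro j hj
  rw [Finset.mem_Icc] at hj
  refine lt_of_le_of_lt (Polynomial.degree_C_mul_X_pow_le _ _) ?_
  exact_mod_cast WithBot.coe_lt_coe.mpr (by omega : n - j < n)

lemma Gpoly_monic (i : Fin m) : (Gpoly k hn hh i).Monic := by
  rw [Gpoly]
  apply Polynomial.monic_X_pow_add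
  have hlt := Gpoly_degree_sum_lt k hn hh i
  rwa [Polynomial.degree_X_pow] at hlt

lemma Gpoly_natDegree (i : Fin m) : (Gpoly k hn hh i).natDegree = n := by
  rw [Gpoly]
  have hdeg : (Polynomial.X ^ n + ∑ j ∈ Finset.Icc 1 n,
      Polynomial.C ((-1 : Pring k m n h) ^ j * cvar k hn hh i j) *
        Polynomial.X ^ (n - j)).degree = (n : WithBot ℕ) := by
    rw [Polynomial.degree_add_eq_left_of_degree_lt (Gpoly_degree_sum_lt k hn hh i),
      Polynomial.degree_X_pow]
  exact Polynomial.natDegree_eq_of_degree_eq_some hdeg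

lemma Gpoly_coeff (i : Fin m) (j : ℕ) (h1 : 1 ≤ j) (h2 : j ≤ n) :
    (Gpoly k hn hh i).coeff (n - j) = (-1 : Pring k m n h) ^ j * cvar k hn hh i j := by
  rw [Gpoly, Polynomial.coeff_add, Polynomial.coeff_X_pow, if_neg (by omega : ¬ n - j = n),
    Polynomial.finset_sum_coeff]
  rw [Finset.sum_eq_single j]
  · rw [Polynomial.coeff_C_mul, Polynomial.coeff_X_pow, if_pos rfl, mul_one, zero_add]
  · intro b hb hbj
    rw [Finset.mem_Icc] at hb
    rw [Polynomial.coeff_C_mul, Polynomial.coeff_X_pow, if_neg (by omega), mul_zero]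
  · intro hj
    exact absurd (Finset.mem_Icc.mpr ⟨h1, h2⟩) hj

include hn hh in
lemma ψmap_isIntegralElem (v : Fin m × Fin n) :
    ((ψmap k m n h hm : Pring k m n h →ₐ[k] Qring k m n h hm) :
      Pring k m n h →+* Qring k m n h hm).IsIntegralElem
      (Ideal.Quotient.mk (theIdeal k m n h hm) (MvPolynomial.X v)) := by
  refine ⟨Gpoly k hn hh v.1, Gpoly_monic k hn hh v.1, ?_⟩
  rw [Gpoly, Polynomial.eval₂_add, Polynomial.eval₂_X_pow, Polynomial.eval₂_finset_sum]
  simp only [Polynomial.eval₂_mul, Polynomial.eval₂_C, Polynomial.eval₂_X_pow]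
  have hrw : ∀ j ∈ Finset.Icc 1 n,
      ((ψmap k m n h hm : Pring k m n h →ₐ[k] Qring k m n h hm) :
        Pring k m n h →+* Qring k m n h hm) ((-1 : Pring k m n h) ^ j * cvar k hn hh v.1 j) *
        (Ideal.Quotient.mk (theIdeal k m n h hm) (MvPolynomial.X v)) ^ (n - j)
      = Ideal.Quotient.mk (theIdeal k m n h hm)
          ((-1 : R0ring k m n) ^ j * MvPolynomial.rename (Prod.mk v.1)
            (MvPolynomial.esymm (Fin n) k j) * (MvPolynomial.X v) ^ (n - j)) := by
    intro j hj
    rw [Finset.mem_Icc] at hj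
    have : ((ψmap k m n h hm : Pring k m n h →ₐ[k] Qring k m n h hm) :
        Pring k m n h →+* Qring k m n h hm) ((-1 : Pring k m n h) ^ j * cvar k hn hh v.1 j) =
        (-1 : Qring k m n h hm) ^ j * Ideal.Quotient.mk (theIdeal k m n h hm)
          (MvPolynomial.rename (Prod.mk v.1) (MvPolynomial.esymm (Fin n) k j)) := by
      rw [map_mul, map_pow, map_neg, map_one]
      congr 1
      exact ψmap_cvar k hm hn hh v.1 j hj.1 hj.2
    rw [this, map_mul, map_mul, map_pow, map_neg, map_one, map_pow]
  rw [Finset.sum_congr rfl hrw, ← map_pow, ← map_sum, ← map_add]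
  have hvieta := congrArg (MvPolynomial.rename (Prod.mk v.1)) (esymm_vieta k n v.2)
  simp only [map_add, map_pow, map_sum, map_mul, map_neg, map_one,
    MvPolynomial.rename_X, map_zero] at hvieta
  have hv : ((v.1, v.2) : Fin m × Fin n) = v := rfl
  rw [hv] at hvieta
  rw [hvieta, map_zero]

include hn hh in
lemma ψmap_injective : Function.Injective (ψmap k m n h hm) := by
  classical
  set L := AlgebraicClosure (FractionRing (Pring k m n h)) with hL
  set ρ : Pring k m n h →+* L :=
    (algebraMap (FractionRing (Pring k m n h)) L).comp
      (algebraMap (Pring k m n h) (FractionRing (Pring k m n h))) with hρ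
  have hρinj : Function.Injective ρ :=
    (algebraMap (FractionRing (Pring k m n h)) L).injective.comp
      (IsFractionRing.injective _ _)
  set g : Fin m → Polynomial L := fun i => (Gpoly k hn hh i).map ρ with hg
  have hgdef : ∀ i, g i = (Gpoly k hn hh i).map ρ := fun _ => rfl
  have hgmonic : ∀ i, (g i).Monic := fun i => (Gpoly_monic k hn hh i).map ρ
  have hgdeg : ∀ i, (g i).natDegree = n := fun i => by
    rw [hgdef i, (Gpoly_monic k hn hh i).natDegree_map ρ, Gpoly_natDegree k hn hh i]
  have hcard : ∀ i, Multiset.card (g i).roots = n := fun i => by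
    have hs := Polynomial.splits_iff_card_roots.mp (IsAlgClosed.splits (g i))
    rw [hgdeg i] at hs
    exact hs
  have hlen : ∀ i, (n = ((g i).roots.toList.length)) := fun i => by
    rw [Multiset.length_toList, hcard i]
  set r : Fin m → Fin n → L := fun i l => (g i).roots.toList.get (Fin.cast (hlen i) l) with hr
  have hmap : ∀ i, (Finset.univ.val.map (r i)) = (g i).roots := by
    intro i
    rw [Fin.univ_val_map]
    have hofn : List.ofFn (r i) = (g i).roots.toList := by
      refine List.ext_get (by simp [← hlen i]) ?_
      intro idx h1 h2
      simp [hr]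
    rw [hofn, Multiset.coe_toList]
  have hesymm : ∀ (i : Fin m) (j : ℕ), 1 ≤ j → j ≤ n →
      ((g i).roots).esymm j = ρ (cvar k hn hh i j) := by
    intro i j h1 h2
    have hco : (g i).coeff (n - j) = ρ ((-1 : Pring k m n h) ^ j * cvar k hn hh i j) := by
      rw [hgdef i, Polynomial.coeff_map, Gpoly_coeff k hn hh i j h1 h2]
    have hsp := Polynomial.coeff_eq_esymm_roots_of_splits
      (IsAlgClosed.splits (g i))
      (show n - j ≤ (g i).natDegree by rw [hgdeg i]; omega)
    rw [hgdeg i] at hsp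
    have hnj : n - (n - j) = j := by omega
    rw [hnj, (hgmonic i).leadingCoeff, one_mul, hco] at hsp
    rw [map_mul, map_pow, map_neg, map_one] at hsp
    exact (mul_left_cancel₀ (pow_ne_zero j (by norm_num : (-1 : L) ≠ 0)) hsp).symm
  letI : Algebra k L := (ρ.comp (MvPolynomial.C : k →+* Pring k m n h)).toAlgebra
  set χ0 : R0ring k m n →ₐ[k] L :=
    MvPolynomial.aeval (fun v : Fin m × Fin n => r v.1 v.2) with hχ0
  have hχesymm : ∀ (i : Fin m) (j : ℕ),
      χ0 (MvPolynomial.rename (Prod.mk i) (MvPolynomial.esymm (Fin n) k j)) =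
        ((g i).roots).esymm j := by
    intro i j
    rw [hχ0]
    rw [MvPolynomial.aeval_rename]
    have hco : ((fun v : Fin m × Fin n => r v.1 v.2) ∘ Prod.mk i) = r i := rfl
    rw [hco, MvPolynomial.aeval_esymm_eq_multiset_esymm, hmap i]
  have hker : ∀ p ∈ genSet k m n h hm, χ0 p = 0 := by
    rintro p ⟨i, j, hi, h1, h2, rfl⟩
    rw [map_sub, hχesymm, hχesymm, hesymm _ j h1 (by omega), hesymm i j h1 (by omega)]
    have hcv : cvar k hn hh (⟨0, hm⟩ : Fin m) j = cvar k hn hh i j := by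
      rw [cvar, cvar, dif_pos ⟨h1, h2⟩, dif_pos ⟨h1, h2⟩]
    rw [hcv, sub_self]
  set χ : Qring k m n h hm →+* L :=
    Ideal.Quotient.lift (theIdeal k m n h hm) (χ0 : R0ring k m n →+* L)
      (by
        have hsp : theIdeal k m n h hm ≤ RingHom.ker (χ0 : R0ring k m n →+* L) := by
          have hsub : genSet k m n h hm ⊆ ↑(RingHom.ker (χ0 : R0ring k m n →+* L)) := by
            rw [Set.subset_def]
            intro p hp
            exact SetLike.mem_coe.mpr
              (RingHom.mem_ker.mpr ((congrFun (RingHom.coe_coe χ0) p).trans (hker p hp)))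
          rw [theIdeal]
          exact Ideal.span_le.mpr hsub
        intro a ha
        exact RingHom.mem_ker.mp (SetLike.le_def.mp hsp ha)) with hχ
  have hcomp : ∀ p : Pring k m n h, χ (ψmap k m n h hm p) = ρ p := by
    have hhom : χ.comp ((ψmap k m n h hm : Pring k m n h →ₐ[k] Qring k m n h hm) :
        Pring k m n h →+* Qring k m n h hm) = ρ := by
      apply MvPolynomial.ringHom_ext
      · intro a
        simp only [RingHom.comp_apply, AlgHom.coe_toRingHom]
        rw [show ((MvPolynomial.C a : Pring k m n h)) = algebraMap k (Pring k m n h) a from rfl,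
          AlgHom.commutes]
        have h1 : algebraMap k (Qring k m n h hm) a =
            Ideal.Quotient.mk (theIdeal k m n h hm) (MvPolynomial.C a) := rfl
        rw [h1, hχ, Ideal.Quotient.lift_mk]
        have h2 : (χ0 : R0ring k m n →+* L) (MvPolynomial.C a) = algebraMap k L a := by
          rw [show ((MvPolynomial.C a : R0ring k m n)) = algebraMap k (R0ring k m n) a from rfl]
          exact χ0.commutes a
        rw [h2]
        rfl
      · intro x
        simp only [RingHom.comp_apply, AlgHom.coe_toRingHom]
        rw [ψmap, MvPolynomial.aeval_X, hχ, Ideal.Quotient.lift_mk]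
        cases x with
        | inl j =>
          rw [Evar]
          simp only [Sum.elim_inl, RingHom.coe_coe]
          have hj1 : 1 ≤ (j : ℕ) + 1 := by omega
          have hj2 : (j : ℕ) + 1 ≤ n := by have := j.isLt; omega
          rw [hχesymm, hesymm _ _ hj1 hj2]
          have hcv : cvar k hn hh (⟨0, hm⟩ : Fin m) ((j : ℕ) + 1) =
              MvPolynomial.X (Sum.inl j) := by
            rw [cvar, dif_pos ⟨hj1, by have := j.isLt; omega⟩]
            congr
          rw [hcv]
        | inr il =>
          obtain ⟨i, l⟩ := il
          rw [Evar]
          simp only [Sum.elim_inr, RingHom.coe_coe]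
          have hj1 : 1 ≤ n - h + (l : ℕ) := by omega
          have hj2 : n - h + (l : ℕ) ≤ n := by have := l.isLt; omega
          rw [hχesymm, hesymm _ _ hj1 hj2]
          have hcv : cvar k hn hh i (n - h + (l : ℕ)) =
              MvPolynomial.X (Sum.inr (i, l)) := by
            rw [cvar, dif_neg (by omega), dif_pos ⟨by omega, hj2⟩]
            congr
            omega
          rw [hcv]
    intro p
    exact RingHom.congr_fun hhom p
  intro p q hpq
  apply hρinj
  rw [← hcomp p, ← hcomp q, hpq]

include hn hh in
theorem ringKrullDim_Qring :
    ringKrullDim (Qring k m n h hm) = (((n - h - 1) + m * (h + 1) : ℕ) : WithBot ℕ∞) := by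
  letI alg : Algebra (Pring k m n h) (Qring k m n h hm) :=
    ((ψmap k m n h hm : Pring k m n h →ₐ[k] Qring k m n h hm) :
      Pring k m n h →+* Qring k m n h hm).toAlgebra
  have halgmap : algebraMap (Pring k m n h) (Qring k m n h hm) =
      ((ψmap k m n h hm : Pring k m n h →ₐ[k] Qring k m n h hm) :
        Pring k m n h →+* Qring k m n h hm) := rfl
  haveI htower : IsScalarTower k (Pring k m n h) (Qring k m n h hm) :=
    IsScalarTower.of_algebraMap_eq' (by rw [halgmap, AlgHom.comp_algebraMap])
  haveI hint : Algebra.IsIntegral (Pring k m n h) (Qring k m n h hm) := by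
    constructor
    intro x
    have hgen : Algebra.adjoin k (Set.range (fun v : Fin m × Fin n =>
        Ideal.Quotient.mk (theIdeal k m n h hm) (MvPolynomial.X v))) = ⊤ := by
      have h1 : Set.range (fun v : Fin m × Fin n =>
          Ideal.Quotient.mk (theIdeal k m n h hm) (MvPolynomial.X v)) =
          (Ideal.Quotient.mkₐ k (theIdeal k m n h hm)) '' (Set.range MvPolynomial.X) := by
        rw [← Set.range_comp]; rfl
      rw [h1, ← AlgHom.map_adjoin, MvPolynomial.adjoin_range_X, Algebra.map_top]
      exact (AlgHom.range_eq_top _).mpr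
        (Ideal.Quotient.mkₐ_surjective k _)
    have hsub : (⊤ : Subalgebra k (Qring k m n h hm)) ≤
        Subalgebra.restrictScalars k
          (integralClosure (Pring k m n h) (Qring k m n h hm)) := by
      rw [← hgen]
      apply Algebra.adjoin_le
      rintro _ ⟨v, rfl⟩
      show _ ∈ integralClosure (Pring k m n h) (Qring k m n h hm)
      exact ψmap_isIntegralElem k hm hn hh v
    exact hsub (by trivial : x ∈ (⊤ : Subalgebra k (Qring k m n h hm)))
  have hdim1 : ringKrullDim (Qring k m n h hm) = ringKrullDim (Pring k m n h) :=
    ringKrullDim_eq_of_isIntegral_of_injective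
      (by rw [halgmap]; exact ψmap_injective k hm hn hh)
  have e : NIdx m n h ≃ Fin ((n - h - 1) + m * (h + 1)) := by
    apply Fintype.equivFinOfCardEq
    simp [Fintype.card_sum, Fintype.card_prod]
  have hdim2 : ringKrullDim (Pring k m n h) =
      (((n - h - 1) + m * (h + 1) : ℕ) : WithBot ℕ∞) := by
    rw [ringKrullDim_eq_of_ringEquiv (MvPolynomial.renameEquiv k e).toRingEquiv]
    exact ringKrullDim_mvPolynomial_fin _
  rw [hdim1, hdim2]

end Main


/-- The affine coordinate ring of the affine cone `Y_{m,n,h}`, i.e. the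
quotient of `k[z_{i,j}]` by the ideal generated by
`e_n^j(z_{1,•}) - e_n^j(z_{i,•})` for `2 ≤ i ≤ m`, `1 ≤ j ≤ n - h - 1`, has Krull dimension
`n + (m - 1)(h + 1)`. Here row `1` is indexed by `⟨0, _⟩ : Fin m` and rows `2, …, m` by
the indices `i ≠ ⟨0, _⟩`. -/
theorem krullDim_coneShortIntervals {k : Type*} [Field k] [IsAlgClosed k] (m n h : ℕ)
    (hm : 2 ≤ m) (hn : 4 ≤ n) (hh1 : 1 ≤ h) (hh2 : h ≤ n - 3) :
    ringKrullDim (MvPolynomial (Fin m × Fin n) k ⧸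
      Ideal.span {p : MvPolynomial (Fin m × Fin n) k | ∃ (i : Fin m) (j : ℕ),
        i ≠ ⟨0, by omega⟩ ∧ 1 ≤ j ∧ j ≤ n - h - 1 ∧
        p = MvPolynomial.rename (Prod.mk (⟨0, by omega⟩ : Fin m)) (MvPolynomial.esymm (Fin n) k j) -
            MvPolynomial.rename (Prod.mk i) (MvPolynomial.esymm (Fin n) k j)}) =
      (n + (m - 1) * (h + 1) : ℕ) := by
  have h0 : 0 < m := by omega
  have hn3 : 3 ≤ n := by omega
  have hmain := ringKrullDim_Qring k (m := m) (n := n) (h := h) h0 hn3 hh2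
  have harith : (n - h - 1) + m * (h + 1) = n + (m - 1) * (h + 1) := by
    have hmm : (m - 1) + 1 = m := by omega
    have hab : m * (h + 1) = (m - 1) * (h + 1) + (h + 1) := by
      calc m * (h + 1) = ((m - 1) + 1) * (h + 1) := by rw [hmm]
        _ = (m - 1) * (h + 1) + (h + 1) := by ring
    omega
  rw [harith] at hmain
  exact hmain
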